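/- The Gauss norm on the quantum affinoid algebra k{T₁,...,Tₙ}_{q,r}, defined by |∑ a_l T^l| = max_l |a_l| r^l, is multiplicative: |fg| = |f||g| for all f, g. -/

import Mathlib

open scoped NNReal ENNReal

namespace QuantumAffinoid

variable {k : Type*} [NontriviallyNormedField k] {n : ℕ}

/-- The weight `r^l = ∏ rᵢ^{lᵢ}` of a monomial exponent `l`. -/
noncomputable def weight (r : Fin n → ℝ≥0) (l : Fin n → ℕ) : ℝ≥0 :=
  ∏ i, r i ^ l i

/-- The convergence condition defining the quantum affinoid algebra `k{T}_{q,r}`: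
`max |a_l| r^l → 0` as `|l| → ∞`. -/
def IsConvergent (r : Fin n → ℝ≥0) (a : (Fin n → ℕ) → k) : Prop :=
  Filter.Tendsto (fun l => ‖a l‖₊ * weight r l) Filter.cofinite (nhds 0)

/-- The Gauss norm `|∑ a_l T^l| = max_l |a_l| r^l` (as a supremum in `ℝ≥0∞`). -/
noncomputable def gaussNorm (r : Fin n → ℝ≥0) (a : (Fin n → ℕ) → k) : ℝ≥0∞ :=
  ⨆ l : Fin n → ℕ, (‖a l‖₊ * weight r l : ℝ≥0)

/-- The number of elementary transpositions needed to normally order `T^u T^v`,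
coming from the relations `TᵢTⱼ = q TⱼTᵢ` for `j < i`. -/
def twist (u v : Fin n → ℕ) : ℕ :=
  ∑ p : Fin n × Fin n, if p.2 < p.1 then u p.1 * v p.2 else 0

/-- The product of two series in the quantum affinoid algebra `k{T}_{q,r}`, written in
normally ordered form using `TᵢTⱼ = q TⱼTᵢ` for `j < i`. -/
noncomputable def mul (q : k) (a b : (Fin n → ℕ) → k) : (Fin n → ℕ) → k :=
  fun l => ∑ u ∈ Finset.Iic l, q ^ twist u (l - u) * a u * b (l - u)

/-! ### Auxiliary lemmas -/

lemma nnnorm_add_le_max (hna : ∀ x y : k, ‖x + y‖ ≤ max ‖x‖ ‖y‖) (x y : k) :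
    ‖x + y‖₊ ≤ max ‖x‖₊ ‖y‖₊ := by
  rw [← NNReal.coe_le_coe]
  push_cast
  exact hna x y

lemma nnnorm_sum_le (hna : ∀ x y : k, ‖x + y‖ ≤ max ‖x‖ ‖y‖) {ι : Type*}
    (s : Finset ι) (f : ι → k) (c : ℝ≥0) (h : ∀ j ∈ s, ‖f j‖₊ ≤ c) :
    ‖∑ j ∈ s, f j‖₊ ≤ c := by
  classical
  induction s using Finset.induction with
  | empty => simp
  | insert i s' hx ih =>
    rw [Finset.sum_insert hx]
    refine le_trans (nnnorm_add_le_max hna _ _) (max_le (h _ (Finset.mem_insert_self _ _))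
      (ih fun j hj => h j (Finset.mem_insert_of_mem hj)))

lemma nnnorm_add_eq_left (hna : ∀ x y : k, ‖x + y‖ ≤ max ‖x‖ ‖y‖) {x y : k}
    (h : ‖y‖₊ < ‖x‖₊) : ‖x + y‖₊ = ‖x‖₊ := by
  refine le_antisymm (le_trans (nnnorm_add_le_max hna _ _) (max_le le_rfl h.le)) ?_
  have h2 : ‖x‖₊ ≤ max ‖x + y‖₊ ‖y‖₊ := by
    have := nnnorm_add_le_max hna (x + y) (-y)
    simpa using this
  rcases le_max_iff.mp h2 with h3 | h3
  · exact h3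
  · exact absurd h3 (not_le.mpr h)

lemma nnnorm_sum_eq_of_dominant (hna : ∀ x y : k, ‖x + y‖ ≤ max ‖x‖ ‖y‖) {ι : Type*}
    (s : Finset ι) (f : ι → k) (i₀ : ι) (hi₀ : i₀ ∈ s)
    (h : ∀ j ∈ s, j ≠ i₀ → ‖f j‖₊ < ‖f i₀‖₊) :
    ‖∑ j ∈ s, f j‖₊ = ‖f i₀‖₊ := by
  classical
  have hsplit : ∑ j ∈ s, f j = f i₀ + ∑ j ∈ s.erase i₀, f j := by
    rw [Finset.add_sum_erase _ _ hi₀]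
  rcases (s.erase i₀).eq_empty_or_nonempty with he | he
  · rw [hsplit, he]
    simp
  · have hrest : ‖∑ j ∈ s.erase i₀, f j‖₊ < ‖f i₀‖₊ := by
      have hle : ‖∑ j ∈ s.erase i₀, f j‖₊ ≤ (s.erase i₀).sup' he (fun j => ‖f j‖₊) :=
        nnnorm_sum_le hna _ _ _ fun j hj => Finset.le_sup' (fun j => ‖f j‖₊) hj
      refine lt_of_le_of_lt hle ?_
      rw [Finset.sup'_lt_iff]
      intro j hj
      exact h j (Finset.mem_of_mem_erase hj) (Finset.ne_of_mem_erase hj)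
    rw [hsplit]
    exact nnnorm_add_eq_left hna hrest

lemma weight_pos {r : Fin n → ℝ≥0} (hr : ∀ i, 0 < r i) (l : Fin n → ℕ) :
    0 < weight r l :=
  Finset.prod_pos fun i _ => pow_pos (hr i) _

lemma weight_add (r : Fin n → ℝ≥0) (u v : Fin n → ℕ) :
    weight r (u + v) = weight r u * weight r v := by
  simp [weight, pow_add, Finset.prod_mul_distrib]

lemma exists_max (f : (Fin n → ℕ) → ℝ≥0)
    (hf : Filter.Tendsto f Filter.cofinite (nhds 0)) (hne : ∃ l, f l ≠ 0) :
    ∃ l₀, 0 < f l₀ ∧ (∀ l, f l ≤ f l₀) ∧ ∀ l, f l = f l₀ → toLex l₀ ≤ toLex l := by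
  classical
  obtain ⟨l₁, hl₁⟩ := hne
  have hl₁' : 0 < f l₁ := pos_iff_ne_zero.mpr hl₁
  have hfin : {l | f l₁ ≤ f l}.Finite := by
    have h : (f ⁻¹' Set.Iio (f l₁))ᶜ.Finite :=
      Filter.mem_cofinite.mp (hf (Iio_mem_nhds hl₁'))
    have hset : {l | f l₁ ≤ f l} = (f ⁻¹' Set.Iio (f l₁))ᶜ := by
      ext l; simp [not_lt]
    rw [hset]; exact h
  set T := hfin.toFinset with hT
  have hl₁T : l₁ ∈ T := by simp [hT, hfin.mem_toFinset]
  obtain ⟨m, hmT, hm⟩ := T.exists_max_image f ⟨l₁, hl₁T⟩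
  have hmax : ∀ l, f l ≤ f m := by
    intro l
    by_cases hl : l ∈ T
    · exact hm l hl
    · have hlt : f l < f l₁ := by
        have := hl
        simp only [hT, hfin.mem_toFinset, Set.mem_setOf_eq, not_le] at this
        exact this
      exact hlt.le.trans (hm l₁ hl₁T)
  set A : Finset (Fin n → ℕ) := T.filter (fun l => f l = f m) with hA
  have hmA : m ∈ A := by simp [hA, hmT]
  have hAne : (A.image toLex).Nonempty := ⟨toLex m, Finset.mem_image_of_mem _ hmA⟩
  obtain ⟨l₀, hl₀A, hl₀⟩ := Finset.mem_image.mp ((A.image toLex).min'_mem hAne)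
  have hfl₀ : f l₀ = f m := (Finset.mem_filter.mp hl₀A).2
  refine ⟨l₀, ?_, fun l => (hmax l).trans_eq hfl₀.symm, ?_⟩
  · rw [hfl₀]; exact hl₁'.trans_le (hm l₁ hl₁T)
  · intro l hl
    have hlm : f l = f m := hl.trans hfl₀
    have hlT : l ∈ T := by
      simp only [hT, hfin.mem_toFinset, Set.mem_setOf_eq]
      rw [hlm]
      exact hm l₁ hl₁T
    have hlA : l ∈ A := Finset.mem_filter.mpr ⟨hlT, hlm⟩
    have hmin := (A.image toLex).min'_le (toLex l) (Finset.mem_image_of_mem _ hlA)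
    exact hl₀.le.trans hmin

lemma lex_lt_or_lt {u v u₀ v₀ : Fin n → ℕ} (h : u + v = u₀ + v₀) (hne : u ≠ u₀) :
    toLex u < toLex u₀ ∨ toLex v < toLex v₀ := by
  have hne' : toLex u ≠ toLex u₀ := fun hh => hne (by exact hh)
  rcases lt_or_gt_of_ne hne' with h1 | h1
  · exact Or.inl h1
  · right
    have hadd : toLex u + toLex v = toLex u₀ + toLex v₀ := congrArg toLex h
    have h2 : toLex u₀ + toLex v < toLex u + toLex v := add_lt_add_left h1 (toLex v)
    rw [hadd] at h2
    exact lt_of_add_lt_add_left h2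

/-- The Gauss norm on the quantum affinoid algebra `k{T₁,...,Tₙ}_{q,r}` is
multiplicative: `|fg| = |f| |g|`. -/
theorem gaussNorm_mul
    (hna : ∀ x y : k, ‖x + y‖ ≤ max ‖x‖ ‖y‖)
    (q : k) (hq : ‖q‖ = 1)
    (r : Fin n → ℝ≥0) (hr : ∀ i, 0 < r i)
    (a b : (Fin n → ℕ) → k)
    (ha : IsConvergent r a) (hb : IsConvergent r b) :
    gaussNorm r (mul q a b) = gaussNorm r a * gaussNorm r b := by
  classical
  have hq' : ‖q‖₊ = 1 := NNReal.coe_injective (by simpa using hq)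
  by_cases hA : ∀ l, a l = 0
  · have h1 : gaussNorm r a = 0 := by simp [gaussNorm, hA]
    have h2 : gaussNorm r (mul q a b) = 0 := by simp [gaussNorm, mul, hA]
    rw [h1, h2, zero_mul]
  by_cases hB : ∀ l, b l = 0
  · have h1 : gaussNorm r b = 0 := by simp [gaussNorm, hB]
    have h2 : gaussNorm r (mul q a b) = 0 := by simp [gaussNorm, mul, hB]
    rw [h1, h2, mul_zero]
  push_neg at hA hB
  -- abbreviation
  set F : ((Fin n → ℕ) → k) → (Fin n → ℕ) → ℝ≥0 := fun c l => ‖c l‖₊ * weight r l with hF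
  have hFa : ∃ l, F a l ≠ 0 := by
    obtain ⟨l, hl⟩ := hA
    exact ⟨l, mul_ne_zero (nnnorm_ne_zero_iff.mpr hl) (weight_pos hr l).ne'⟩
  have hFb : ∃ l, F b l ≠ 0 := by
    obtain ⟨l, hl⟩ := hB
    exact ⟨l, mul_ne_zero (nnnorm_ne_zero_iff.mpr hl) (weight_pos hr l).ne'⟩
  obtain ⟨u₀, hu₀pos, hu₀max, hu₀min⟩ := exists_max (F a) ha hFa
  obtain ⟨v₀, hv₀pos, hv₀max, hv₀min⟩ := exists_max (F b) hb hFb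
  set l₀ : Fin n → ℕ := u₀ + v₀ with hl₀
  -- norm of a single summand
  have hterm : ∀ (u v : Fin n → ℕ), ‖q ^ twist u v * a u * b v‖₊ = ‖a u‖₊ * ‖b v‖₊ := by
    intro u v
    rw [nnnorm_mul, nnnorm_mul, nnnorm_pow, hq', one_pow, one_mul]
  -- decomposition of the weight
  have hwdec : ∀ {u l : Fin n → ℕ}, u ≤ l → weight r l = weight r u * weight r (l - u) := by
    intro u l hul
    rw [← weight_add]
    congr 1
    funext i
    exact (Nat.add_sub_cancel' (hul i)).symm
  -- upper bound
  have hub : ∀ l, F (mul q a b) l ≤ F a u₀ * F b v₀ := by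
    intro l
    have hbound : ‖mul q a b l‖₊ ≤ F a u₀ * F b v₀ / weight r l := by
      apply nnnorm_sum_le hna
      intro u hu
      have hul : u ≤ l := Finset.mem_Iic.mp hu
      rw [le_div_iff₀ (weight_pos hr l), hterm, hwdec hul]
      calc ‖a u‖₊ * ‖b (l - u)‖₊ * (weight r u * weight r (l - u))
          = F a u * F b (l - u) := by simp only [hF]; ring
        _ ≤ F a u₀ * F b v₀ := mul_le_mul' (hu₀max u) (hv₀max (l - u))
    calc F (mul q a b) l = ‖mul q a b l‖₊ * weight r l := rfl
      _ ≤ F a u₀ * F b v₀ / weight r l * weight r l :=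
          mul_le_mul_left hbound _
      _ = F a u₀ * F b v₀ := div_mul_cancel₀ _ (weight_pos hr l).ne'
  -- lower bound : the value at l₀
  have hsub : l₀ - u₀ = v₀ := by
    funext i
    simp [hl₀, Nat.add_sub_cancel_left]
  have hu₀mem : u₀ ∈ Finset.Iic l₀ := Finset.mem_Iic.mpr (by rw [hl₀]; exact le_self_add)
  have hdom : ∀ u ∈ Finset.Iic l₀, u ≠ u₀ →
      ‖q ^ twist u (l₀ - u) * a u * b (l₀ - u)‖₊ <
        ‖q ^ twist u₀ (l₀ - u₀) * a u₀ * b (l₀ - u₀)‖₊ := by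
    intro u hu hne
    have hul : u ≤ l₀ := Finset.mem_Iic.mp hu
    set v : Fin n → ℕ := l₀ - u with hv
    have huv : u + v = u₀ + v₀ := by
      have h1 : u + (l₀ - u) = l₀ := funext fun i => Nat.add_sub_cancel' (hul i)
      rw [hv, h1, hl₀]
    rw [hterm, hterm, hsub]
    -- key strict inequality on the weighted values
    have key : F a u * F b v < F a u₀ * F b v₀ := by
      rcases lex_lt_or_lt huv hne with hlt | hlt
      · have hFlt : F a u < F a u₀ :=
          (hu₀max u).lt_of_ne fun he => absurd (hu₀min u he) (not_le.mpr hlt)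
        calc F a u * F b v ≤ F a u * F b v₀ := mul_le_mul_right (hv₀max v) _
          _ < F a u₀ * F b v₀ := mul_lt_mul_of_pos_right hFlt hv₀pos
      · have hFlt : F b v < F b v₀ :=
          (hv₀max v).lt_of_ne fun he => absurd (hv₀min v he) (not_le.mpr hlt)
        calc F a u * F b v ≤ F a u₀ * F b v := mul_le_mul_left (hu₀max u) _
          _ < F a u₀ * F b v₀ := mul_lt_mul_of_pos_left hFlt hu₀pos
    have hw : weight r u * weight r v = weight r u₀ * weight r v₀ := by
      rw [← weight_add, ← weight_add, huv]
    have key2 : ‖a u‖₊ * ‖b v‖₊ * (weight r u * weight r v) <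
        ‖a u₀‖₊ * ‖b v₀‖₊ * (weight r u * weight r v) := by
      calc ‖a u‖₊ * ‖b v‖₊ * (weight r u * weight r v) = F a u * F b v := by
            simp only [hF]; ring
        _ < F a u₀ * F b v₀ := key
        _ = ‖a u₀‖₊ * ‖b v₀‖₊ * (weight r u₀ * weight r v₀) := by
            simp only [hF]; ring
        _ = ‖a u₀‖₊ * ‖b v₀‖₊ * (weight r u * weight r v) := by rw [hw]
    exact lt_of_mul_lt_mul_right key2 zero_le
  have hlb : F (mul q a b) l₀ = F a u₀ * F b v₀ := by
    have hsum : ‖mul q a b l₀‖₊ = ‖q ^ twist u₀ (l₀ - u₀) * a u₀ * b (l₀ - u₀)‖₊ :=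
      nnnorm_sum_eq_of_dominant hna _ _ u₀ hu₀mem hdom
    calc F (mul q a b) l₀ = ‖mul q a b l₀‖₊ * weight r l₀ := rfl
      _ = ‖a u₀‖₊ * ‖b v₀‖₊ * (weight r u₀ * weight r v₀) := by
          rw [hsum, hterm, hsub, ← weight_add]
      _ = F a u₀ * F b v₀ := by simp only [hF]; ring
  -- conclude
  have h1 : gaussNorm r (mul q a b) = ((F a u₀ * F b v₀ : ℝ≥0) : ℝ≥0∞) := by
    apply le_antisymm
    · exact iSup_le fun l => ENNReal.coe_le_coe.mpr (hub l)
    · rw [← hlb]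
      exact le_iSup (fun l => ((F (mul q a b) l : ℝ≥0) : ℝ≥0∞)) l₀
  have h2 : gaussNorm r a = ((F a u₀ : ℝ≥0) : ℝ≥0∞) := by
    apply le_antisymm
    · exact iSup_le fun l => ENNReal.coe_le_coe.mpr (hu₀max l)
    · exact le_iSup (fun l => ((F a l : ℝ≥0) : ℝ≥0∞)) u₀
  have h3 : gaussNorm r b = ((F b v₀ : ℝ≥0) : ℝ≥0∞) := by
    apply le_antisymm
    · exact iSup_le fun l => ENNReal.coe_le_coe.mpr (hv₀max l)
    · exact le_iSup (fun l => ((F b l : ℝ≥0) : ℝ≥0∞)) v₀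
  rw [h1, h2, h3, ENNReal.coe_mul]

end QuantumAffinoid
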